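/- Let 𝔸 be a commutative Banach algebra over ℝ with unit 1, let A ∈ 𝔸 be a fixed element, and define τ : ℝ² → 𝔸 by τ(x, t) = 1 + exp(2Ax + 2A³t), where exp is the exponential in 𝔸. Assume τ(x, t) is invertible in 𝔸 for every (x, t). Then U := ∂_x( (∂_x τ) ∘ τ^{-1} ) satisfies the 𝔸-valued KdV equation 4 U_t − 12 U ∘ U_x − U_{xxx} = 0. -/

import Mathlib

/-- Partial derivative in the `x`-direction of a function of `(x, t) : ℝ × ℝ`. -/
noncomputable def pdX {A : Type*} [NormedAddCommGroup A] [NormedSpace ℝ A]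
    (f : ℝ × ℝ → A) : ℝ × ℝ → A :=
  fun p => lineDeriv ℝ f p (1, 0)

/-- Partial derivative in the `t`-direction. -/
noncomputable def pdT {A : Type*} [NormedAddCommGroup A] [NormedSpace ℝ A]
    (f : ℝ × ℝ → A) : ℝ × ℝ → A :=
  fun p => lineDeriv ℝ f p (0, 1)

set_option linter.unusedSectionVars false
section KdVAux
variable {𝔸 : Type*} [NormedCommRing 𝔸] [NormedAlgebra ℝ 𝔸] [CompleteSpace 𝔸]

private lemma pdX_eq {F : ℝ × ℝ → 𝔸} {p : ℝ × ℝ} {d : 𝔸}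
    (h : HasDerivAt (fun t : ℝ => F (p + t • ((1:ℝ), (0:ℝ)))) d 0) : pdX F p = d := by
  exact h.deriv

private lemma pdT_eq {F : ℝ × ℝ → 𝔸} {p : ℝ × ℝ} {d : 𝔸}
    (h : HasDerivAt (fun t : ℝ => F (p + t • ((0:ℝ), (1:ℝ)))) d 0) : pdT F p = d := by
  exact h.deriv

private lemma hasDerivAt_P {f : ℝ → 𝔸} {f' : 𝔸} {s : ℝ} (h : HasDerivAt f f' s)
    (c1 c2 c3 c4 c5 : 𝔸) :
    HasDerivAt (fun t => c1 * f t + c2 * f t ^ 2 + c3 * f t ^ 3 + c4 * f t ^ 4 + c5 * f t ^ 5)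
      ((c1 + 2 * c2 * f s + 3 * c3 * f s ^ 2 + 4 * c4 * f s ^ 3 + 5 * c5 * f s ^ 4) * f') s := by
  have h2 := h.mul h
  have h3 := h2.mul h
  have h4 := h3.mul h
  have h5 := h4.mul h
  have H := (((((h.const_mul c1).add (h2.const_mul c2)).add (h3.const_mul c3)).add
      (h4.const_mul c4)).add (h5.const_mul c5))
  have hfun : (fun t => c1 * f t + c2 * (f t * f t) + c3 * (f t * f t * f t) +
      c4 * (f t * f t * f t * f t) + c5 * (f t * f t * f t * f t * f t)) =
      fun t => c1 * f t + c2 * f t ^ 2 + c3 * f t ^ 3 + c4 * f t ^ 4 + c5 * f t ^ 5 := by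
    funext t; ring
  rw [← hfun]
  refine H.congr_deriv ?_
  simp only [Pi.mul_apply]
  ring

private lemma hasDerivAt_E' (A : 𝔸) (p v : ℝ × ℝ) :
    HasDerivAt (fun s : ℝ =>
        NormedSpace.exp ((2 * (p + s • v).1) • A + (2 * (p + s • v).2) • A ^ 3))
      (((2 * v.1) • A + (2 * v.2) • A ^ 3) *
        NormedSpace.exp ((2 * p.1) • A + (2 * p.2) • A ^ 3)) 0 := by
  set B : 𝔸 := (2 * v.1) • A + (2 * v.2) • A ^ 3 with hB
  have hfun : (fun s : ℝ =>
      NormedSpace.exp ((2 * (p + s • v).1) • A + (2 * (p + s • v).2) • A ^ 3)) =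
      fun s : ℝ => NormedSpace.exp ((2 * p.1) • A + (2 * p.2) • A ^ 3) *
        NormedSpace.exp (s • B) := by
    funext s
    letI : NormedAlgebra ℚ 𝔸 := NormedAlgebra.restrictScalars ℚ ℝ 𝔸
    rw [← NormedSpace.exp_add]
    congr 1
    simp only [hB, Prod.fst_add, Prod.snd_add, Prod.smul_fst, Prod.smul_snd, smul_eq_mul,
      smul_add, smul_smul]
    module
  rw [hfun]
  have h := (hasDerivAt_exp_smul_const (𝕂 := ℝ) B (0:ℝ)).const_mul
      (NormedSpace.exp ((2 * p.1) • A + (2 * p.2) • A ^ 3))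
  simp only [zero_smul, NormedSpace.exp_zero, one_mul] at h
  simpa [mul_comm] using h

private lemma hasDerivAt_V (A : 𝔸) (p v : ℝ × ℝ)
    (hu : IsUnit (1 + NormedSpace.exp ((2 * p.1) • A + (2 * p.2) • A ^ 3))) :
    HasDerivAt (fun s : ℝ =>
        Ring.inverse (1 + NormedSpace.exp ((2 * (p + s • v).1) • A + (2 * (p + s • v).2) • A ^ 3)))
      (-(((2 * v.1) • A + (2 * v.2) • A ^ 3) *
          NormedSpace.exp ((2 * p.1) • A + (2 * p.2) • A ^ 3)) *
        Ring.inverse (1 + NormedSpace.exp ((2 * p.1) • A + (2 * p.2) • A ^ 3)) ^ 2) 0 := by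
  have hc : HasDerivAt (fun s : ℝ =>
      1 + NormedSpace.exp ((2 * (p + s • v).1) • A + (2 * (p + s • v).2) • A ^ 3))
      (((2 * v.1) • A + (2 * v.2) • A ^ 3) *
        NormedSpace.exp ((2 * p.1) • A + (2 * p.2) • A ^ 3)) 0 :=
    (hasDerivAt_E' A p v).const_add 1
  have Hinv := hasFDerivAt_ringInverse (𝕜 := ℝ) hu.unit
  have h0 : (↑hu.unit : 𝔸) =
      1 + NormedSpace.exp ((2 * (p + (0:ℝ) • v).1) • A + (2 * (p + (0:ℝ) • v).2) • A ^ 3) := by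
    simp [hu.unit_spec]
  rw [h0] at Hinv
  have H := (Hinv.comp (0:ℝ) hc.hasFDerivAt).hasDerivAt
  simp only [Function.comp, ContinuousLinearMap.coe_comp', ContinuousLinearMap.neg_apply,
    ContinuousLinearMap.smulRight_apply, ContinuousLinearMap.one_apply, one_smul,
    ContinuousLinearMap.mulLeftRight_apply] at H
  rw [show ((↑hu.unit⁻¹ : 𝔸)) = Ring.inverse
      (1 + NormedSpace.exp ((2 * p.1) • A + (2 * p.2) • A ^ 3)) by
    rw [← Ring.inverse_unit, hu.unit_spec]] at H
  refine H.congr_deriv ?_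
  simp only [ContinuousLinearMap.toSpanSingleton_apply, one_smul]
  ring

/-- The basic building block `g = e·(1+e)⁻¹`. -/
private noncomputable def Eg (A : 𝔸) (p : ℝ × ℝ) : 𝔸 :=
  NormedSpace.exp ((2 * p.1) • A + (2 * p.2) • A ^ 3) *
    Ring.inverse (1 + NormedSpace.exp ((2 * p.1) • A + (2 * p.2) • A ^ 3))

private lemma keyB (A : 𝔸)
    (hu : ∀ q : ℝ × ℝ, IsUnit (1 + NormedSpace.exp ((2 * q.1) • A + (2 * q.2) • A ^ 3)))
    (p v : ℝ × ℝ) :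
    HasDerivAt (fun s : ℝ => Eg A (p + s • v))
      ((((2 * v.1) • A + (2 * v.2) • A ^ 3)) * (Eg A p - Eg A p ^ 2)) 0 := by
  have h := (hasDerivAt_E' A p v).mul (hasDerivAt_V A p v (hu p))
  simp only [zero_smul, add_zero] at h
  unfold Eg
  exact h.congr_deriv (by ring)

private lemma smul2 (A : 𝔸) : ((2 * (1:ℝ)) • A + (2 * (0:ℝ)) • (A^3) : 𝔸) = 2 * A := by
  norm_num
  rw [two_smul, two_mul]

private lemma smul2' (A : 𝔸) : ((2 * (0:ℝ)) • A + (2 * (1:ℝ)) • (A^3) : 𝔸) = 2 * A ^ 3 := by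
  norm_num
  rw [two_smul, two_mul]

private lemma keyX (A : 𝔸)
    (hu : ∀ q : ℝ × ℝ, IsUnit (1 + NormedSpace.exp ((2 * q.1) • A + (2 * q.2) • A ^ 3)))
    (p : ℝ × ℝ) :
    HasDerivAt (fun s : ℝ => Eg A (p + s • ((1:ℝ), (0:ℝ))))
      ((2 * A) * (Eg A p - Eg A p ^ 2)) 0 := by
  have h := keyB A hu p ((1:ℝ), (0:ℝ))
  rwa [show (((1:ℝ),(0:ℝ)) : ℝ × ℝ).1 = (1:ℝ) from rfl,
    show (((1:ℝ),(0:ℝ)) : ℝ × ℝ).2 = (0:ℝ) from rfl, smul2 A] at h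

private lemma keyT (A : 𝔸)
    (hu : ∀ q : ℝ × ℝ, IsUnit (1 + NormedSpace.exp ((2 * q.1) • A + (2 * q.2) • A ^ 3)))
    (p : ℝ × ℝ) :
    HasDerivAt (fun s : ℝ => Eg A (p + s • ((0:ℝ), (1:ℝ))))
      ((2 * A ^ 3) * (Eg A p - Eg A p ^ 2)) 0 := by
  have h := keyB A hu p ((0:ℝ), (1:ℝ))
  rwa [show (((0:ℝ),(1:ℝ)) : ℝ × ℝ).1 = (0:ℝ) from rfl,
    show (((0:ℝ),(1:ℝ)) : ℝ × ℝ).2 = (1:ℝ) from rfl, smul2' A] at h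

end KdVAux

/-- in a commutative Banach ℝ-algebra 𝔸 with unit, for a fixed `A ∈ 𝔸`,
set `τ(x,t) = 1 + exp(2Ax + 2A³t)`.  If `τ(x,t)` is invertible for every `(x,t)`, then
`U := ∂_x((∂_x τ) ∘ τ⁻¹)` satisfies the 𝔸-valued KdV equation
`4U_t − 12 U ∘ U_x − U_{xxx} = 0`. -/
theorem stmt3 {𝔸 : Type*} [NormedCommRing 𝔸] [NormedAlgebra ℝ 𝔸] [CompleteSpace 𝔸]
    (A : 𝔸)
    (τ : ℝ × ℝ → 𝔸)
    (hτ : τ = fun p => 1 + NormedSpace.exp ((2 * p.1) • A + (2 * p.2) • A ^ 3))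
    (hinv : ∀ p, IsUnit (τ p))
    (U : ℝ × ℝ → 𝔸)
    (hU : U = pdX fun p => pdX τ p * Ring.inverse (τ p)) :
    ∀ p, 4 * pdT U p - 12 * (U p * pdX U p) - pdX (pdX (pdX U)) p = 0 := by
  intro p
  have hu : ∀ q : ℝ × ℝ, IsUnit (1 + NormedSpace.exp ((2 * q.1) • A + (2 * q.2) • A ^ 3)) := by
    intro q; have h := hinv q; rwa [hτ] at h
  simp only [hU, hτ]
  -- Step 1: the function inside is `2A·g`.
  have h1 : (fun q : ℝ × ℝ =>
      pdX (fun r : ℝ × ℝ => 1 + NormedSpace.exp ((2 * r.1) • A + (2 * r.2) • A ^ 3)) q *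
        Ring.inverse (1 + NormedSpace.exp ((2 * q.1) • A + (2 * q.2) • A ^ 3))) =
      fun q => (2 * A) * Eg A q + 0 * Eg A q ^ 2 + 0 * Eg A q ^ 3 + 0 * Eg A q ^ 4 +
        0 * Eg A q ^ 5 := by
    funext q
    have hx : pdX (fun r : ℝ × ℝ => 1 + NormedSpace.exp ((2 * r.1) • A + (2 * r.2) • A ^ 3)) q
        = (2 * A) * NormedSpace.exp ((2 * q.1) • A + (2 * q.2) • A ^ 3) := by
      apply pdX_eq
      have h := (hasDerivAt_E' A q ((1:ℝ), (0:ℝ))).const_add 1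
      rwa [show (((1:ℝ),(0:ℝ)) : ℝ × ℝ).1 = (1:ℝ) from rfl,
        show (((1:ℝ),(0:ℝ)) : ℝ × ℝ).2 = (0:ℝ) from rfl, smul2 A] at h
    rw [hx]
    simp only [Eg]
    ring
  rw [h1]
  -- Step 2: U = 4A²(g − g²).
  have h2 : pdX (fun q : ℝ × ℝ => (2 * A) * Eg A q + 0 * Eg A q ^ 2 + 0 * Eg A q ^ 3 +
        0 * Eg A q ^ 4 + 0 * Eg A q ^ 5) =
      fun q => (4 * A ^ 2) * Eg A q + (-(4 * A ^ 2)) * Eg A q ^ 2 + 0 * Eg A q ^ 3 +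
        0 * Eg A q ^ 4 + 0 * Eg A q ^ 5 := by
    funext q
    rw [show (4 * A ^ 2) * Eg A q + (-(4 * A ^ 2)) * Eg A q ^ 2 + 0 * Eg A q ^ 3 +
          0 * Eg A q ^ 4 + 0 * Eg A q ^ 5
        = ((2 * A) + 2 * 0 * Eg A q + 3 * 0 * Eg A q ^ 2 + 4 * 0 * Eg A q ^ 3 +
            5 * 0 * Eg A q ^ 4) * ((2 * A) * (Eg A q - Eg A q ^ 2)) from by ring]
    have H := hasDerivAt_P (keyX A hu q) (2 * A) 0 0 0 0
    simp only [zero_smul, add_zero] at H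
    exact pdX_eq H
  rw [h2]
  -- Step 3: U_x.
  have h3 : pdX (fun q : ℝ × ℝ => (4 * A ^ 2) * Eg A q + (-(4 * A ^ 2)) * Eg A q ^ 2 +
        0 * Eg A q ^ 3 + 0 * Eg A q ^ 4 + 0 * Eg A q ^ 5) =
      fun q => (8 * A ^ 3) * Eg A q + (-(24 * A ^ 3)) * Eg A q ^ 2 + (16 * A ^ 3) * Eg A q ^ 3 +
        0 * Eg A q ^ 4 + 0 * Eg A q ^ 5 := by
    funext q
    rw [show (8 * A ^ 3) * Eg A q + (-(24 * A ^ 3)) * Eg A q ^ 2 + (16 * A ^ 3) * Eg A q ^ 3 +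
          0 * Eg A q ^ 4 + 0 * Eg A q ^ 5
        = ((4 * A ^ 2) + 2 * (-(4 * A ^ 2)) * Eg A q + 3 * 0 * Eg A q ^ 2 + 4 * 0 * Eg A q ^ 3 +
            5 * 0 * Eg A q ^ 4) * ((2 * A) * (Eg A q - Eg A q ^ 2)) from by ring]
    have H := hasDerivAt_P (keyX A hu q) (4 * A ^ 2) (-(4 * A ^ 2)) 0 0 0
    simp only [zero_smul, add_zero] at H
    exact pdX_eq H
  rw [h3]
  -- Step 4: U_xx.
  have h4 : pdX (fun q : ℝ × ℝ => (8 * A ^ 3) * Eg A q + (-(24 * A ^ 3)) * Eg A q ^ 2 +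
        (16 * A ^ 3) * Eg A q ^ 3 + 0 * Eg A q ^ 4 + 0 * Eg A q ^ 5) =
      fun q => (16 * A ^ 4) * Eg A q + (-(112 * A ^ 4)) * Eg A q ^ 2 +
        (192 * A ^ 4) * Eg A q ^ 3 + (-(96 * A ^ 4)) * Eg A q ^ 4 + 0 * Eg A q ^ 5 := by
    funext q
    rw [show (16 * A ^ 4) * Eg A q + (-(112 * A ^ 4)) * Eg A q ^ 2 +
          (192 * A ^ 4) * Eg A q ^ 3 + (-(96 * A ^ 4)) * Eg A q ^ 4 + 0 * Eg A q ^ 5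
        = ((8 * A ^ 3) + 2 * (-(24 * A ^ 3)) * Eg A q + 3 * (16 * A ^ 3) * Eg A q ^ 2 +
            4 * 0 * Eg A q ^ 3 + 5 * 0 * Eg A q ^ 4) * ((2 * A) * (Eg A q - Eg A q ^ 2))
          from by ring]
    have H := hasDerivAt_P (keyX A hu q) (8 * A ^ 3) (-(24 * A ^ 3)) (16 * A ^ 3) 0 0
    simp only [zero_smul, add_zero] at H
    exact pdX_eq H
  rw [h4]
  -- Pointwise values of U_xxx and U_t at p.
  have H1 := hasDerivAt_P (keyX A hu p) (16 * A ^ 4) (-(112 * A ^ 4)) (192 * A ^ 4)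
    (-(96 * A ^ 4)) 0
  simp only [zero_smul, add_zero] at H1
  have hxxx := pdX_eq (F := fun q : ℝ × ℝ => (16 * A ^ 4) * Eg A q + (-(112 * A ^ 4)) * Eg A q ^ 2 +
    (192 * A ^ 4) * Eg A q ^ 3 + (-(96 * A ^ 4)) * Eg A q ^ 4 + 0 * Eg A q ^ 5) H1
  have H2 := hasDerivAt_P (keyT A hu p) (4 * A ^ 2) (-(4 * A ^ 2)) 0 0 0
  simp only [zero_smul, add_zero] at H2
  have ht := pdT_eq (F := fun q : ℝ × ℝ => (4 * A ^ 2) * Eg A q + (-(4 * A ^ 2)) * Eg A q ^ 2 +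
    0 * Eg A q ^ 3 + 0 * Eg A q ^ 4 + 0 * Eg A q ^ 5) H2
  rw [hxxx, ht]
  ring
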